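/- Let F be a proper subfield of ℝ (hence an incomplete Archimedean ordered field). Then F fails the Limit of Derivatives Property: there exists f : F → F continuous at 0, differentiable on F \ {0} with f' ≡ 0 there (so lim_{t→0} f'(t) = 0), satisfying (1/2)|t| < |f(t)| < 2|t| for all nonzero t, so that f'(0), if it exists, is nonzero. -/

import Mathlib

open Filter Topology

/-- The derivative of `f : F → F` at `a`. -/
def HasDerivO {F : Type*} [Field F] [LinearOrder F] [IsStrictOrderedRing F] [TopologicalSpace F]
    (f : F → F) (L a : F) : Prop :=
  Tendsto (fun x => (f x - f a) / (x - a)) (𝓝[≠] a) (𝓝 L)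


lemma aux_coe_abs (K : Subfield ℝ) (a : K) : ((|a| : K) : ℝ) = |(a : ℝ)| := by
  rcases le_total a 0 with h | h
  · rw [abs_of_nonpos h, abs_of_nonpos (by exact_mod_cast h)]; push_cast; ring
  · rw [abs_of_nonneg h, abs_of_nonneg (by exact_mod_cast h)]

lemma aux_coe_zpow (K : Subfield ℝ) (n : ℤ) : (((2:K) ^ n : K) : ℝ) = (2:ℝ) ^ n := by
  have h := map_zpow₀ (K.subtype) (2:K) n
  simp only [Subfield.coe_subtype] at h
  rw [h]; norm_cast

lemma aux_exists_c (K : Subfield ℝ) (hK : K ≠ ⊤) : ∃ c : ℝ, c ∉ K ∧ 1/2 < c ∧ c < 1 := by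
  obtain ⟨x, hx⟩ : ∃ x : ℝ, x ∉ K := by
    by_contra h; push_neg at h
    exact hK (Subfield.ext fun z => by simp [h z])
  have hx0 : x ≠ 0 := fun h => hx (h ▸ K.zero_mem)
  have hyK : |x| ∉ K := by
    rcases abs_cases x with ⟨h, _⟩ | ⟨h, _⟩
    · rwa [h]
    · rw [h]; intro hm; exact hx (by simpa using K.neg_mem hm)
  have hy0 : 0 < |x| := abs_pos.mpr hx0
  obtain ⟨q, hq1, hq2⟩ := exists_rat_btwn
    ((div_lt_div_iff_of_pos_left one_pos (by positivity) hy0).mpr (by linarith) : 1/(2*|x|) < 1/|x|)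
  have hq0 : (0:ℝ) < q := lt_trans (by positivity) hq1
  refine ⟨q * |x|, ?_, ?_, ?_⟩
  · intro hm
    apply hyK
    have h2 : |x| = (q:ℝ)⁻¹ * (q * |x|) := by field_simp
    rw [h2]
    exact K.mul_mem (by exact_mod_cast SubfieldClass.ratCast_mem K q⁻¹) hm
  · rw [div_lt_iff₀ (by positivity)] at hq1
    nlinarith
  · rw [lt_div_iff₀ hy0] at hq2
    linarith

lemma aux_bracket (c : ℝ) (hc1 : 1/2 < c) (y : ℝ) (hy : 0 < y)
    (hne : ∀ m : ℤ, y ≠ c * 2 ^ m) :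
    c * 2 ^ (-⌈Real.logb 2 (c/y)⌉) < y ∧ y < c * 2 ^ (-⌈Real.logb 2 (c/y)⌉ + 1) := by
  have hc0 : 0 < c := by linarith
  have hcy : 0 < c / y := by positivity
  set L := Real.logb 2 (c/y) with hL
  set n := ⌈L⌉ with hn
  have h2n : (0:ℝ) < (2:ℝ) ^ n := by positivity
  have h2n1 : (0:ℝ) < (2:ℝ) ^ (n-1) := by positivity
  constructor
  · have hLn : L ≤ (n:ℝ) := Int.le_ceil L
    rw [hL, Real.logb_le_iff_le_rpow one_lt_two hcy, Real.rpow_intCast] at hLn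
    have : c / 2^n ≤ y := by
      rw [div_le_iff₀ h2n]
      rw [div_le_iff₀ hy] at hLn
      linarith
    have hne' : c * 2^(-n) ≠ y := fun h => hne (-n) h.symm
    rw [zpow_neg]
    rcases lt_or_eq_of_le this with h | h
    · rwa [div_eq_mul_inv] at h
    · exact absurd (by rw [zpow_neg, ← div_eq_mul_inv, h]) hne'
  · have hLn : ((n:ℝ)) - 1 < L := by
      have := Int.ceil_lt_add_one L
      push_cast at this ⊢
      linarith [Int.ceil_lt_add_one L]
    have h1 : ((n - 1 : ℤ) : ℝ) < L := by push_cast; linarith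
    rw [hL, Real.lt_logb_iff_rpow_lt one_lt_two hcy, Real.rpow_intCast] at h1
    rw [lt_div_iff₀ hy] at h1
    have hkey : (2:ℝ)^(-n+1) * 2^(n-1) = 1 := by
      rw [← zpow_add₀ (by norm_num : (2:ℝ) ≠ 0)]; norm_num
    nlinarith [h1, hkey, h2n1]

lemma aux_ceil_eq (c : ℝ) (hc0 : 0 < c) (y : ℝ) (hy : 0 < y) (n : ℤ)
    (h1 : c * 2^(-n) < y) (h2 : y < c * 2^(-n+1)) : ⌈Real.logb 2 (c/y)⌉ = n := by
  have hcy : 0 < c / y := by positivity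
  have h2n : (0:ℝ) < (2:ℝ) ^ n := by positivity
  have h2n1 : (0:ℝ) < (2:ℝ) ^ (n-1) := by positivity
  rw [Int.ceil_eq_iff]
  constructor
  · have h1' : ((n - 1 : ℤ) : ℝ) < Real.logb 2 (c/y) := by
      rw [Real.lt_logb_iff_rpow_lt one_lt_two hcy, Real.rpow_intCast, lt_div_iff₀ hy]
      have hkey : (2:ℝ)^(-n+1) * 2^(n-1) = 1 := by
        rw [← zpow_add₀ (by norm_num : (2:ℝ) ≠ 0)]; norm_num
      nlinarith [h2, hkey, h2n1]
    push_cast at h1' ⊢; linarith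
  · rw [Real.logb_le_iff_le_rpow one_lt_two hcy, Real.rpow_intCast, div_le_iff₀ hy]
    have hkey : (2:ℝ)^(-n) * 2^n = 1 := by
      rw [← zpow_add₀ (by norm_num : (2:ℝ) ≠ 0)]; norm_num
    nlinarith [h1, hkey, h2n]


/-- every proper subfield of ℝ fails the Limit of Derivatives Property:
there is an `f` continuous at `0`, with derivative `0` at every nonzero point,
satisfying `(1/2)|t| < |f t| < 2|t|` for all nonzero `t`, so that any derivative of `f`
at `0` is nonzero. -/
theorem stmt_14 (K : Subfield ℝ) (hK : K ≠ ⊤) :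
    ∃ f : K → K, ContinuousAt f 0 ∧
      (∀ t : K, t ≠ 0 → HasDerivO f 0 t) ∧
      Tendsto (fun _ : K => (0 : K)) (𝓝[≠] (0 : K)) (𝓝 0) ∧
      (∀ t : K, t ≠ 0 → (1 / 2 : K) * |t| < |f t| ∧ |f t| < 2 * |t|) ∧
      (∀ L : K, HasDerivO f L 0 → L ≠ 0) := by
  obtain ⟨c, hcK, hc1, hc2⟩ := aux_exists_c K hK
  have hc0 : 0 < c := by linarith
  have h2mK : ∀ m : ℤ, (2:ℝ) ^ m ∈ K := fun m => aux_coe_zpow K m ▸ SetLike.coe_mem _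
  have hcm : ∀ m : ℤ, c * 2 ^ m ∉ K := by
    intro m hm
    apply hcK
    have h1 : c = (c * 2 ^ m) * 2 ^ (-m) := by
      rw [mul_assoc, ← zpow_add₀ (by norm_num : (2:ℝ) ≠ 0)]; norm_num
    rw [h1]
    exact K.mul_mem hm (h2mK (-m))
  set N : K → ℤ := fun t => ⌈Real.logb 2 (c / |(t:ℝ)|)⌉ with hN
  set f : K → K := fun t => if t = 0 then 0 else (2:K) ^ (-N t) with hf
  have hf0 : f 0 = 0 := if_pos rfl
  have hcoe0 : ∀ t : K, t ≠ 0 → ((t:ℝ)) ≠ 0 := by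
    intro t ht h; exact ht (by exact_mod_cast h)
  -- bracket for nonzero t
  have hb : ∀ t : K, t ≠ 0 →
      c * 2 ^ (-N t) < |(t:ℝ)| ∧ |(t:ℝ)| < c * 2 ^ (-N t + 1) := by
    intro t ht
    refine aux_bracket c hc1 _ (abs_pos.mpr (hcoe0 t ht)) ?_
    intro m h
    apply hcm m
    rw [← h, ← aux_coe_abs]
    exact SetLike.coe_mem _
  -- coe of f at nonzero t
  have hfval : ∀ t : K, t ≠ 0 → ((f t : K) : ℝ) = (2:ℝ) ^ (-N t) := by
    intro t ht
    rw [hf]; simp only [if_neg ht]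
    exact aux_coe_zpow K _
  -- real bounds
  have hbound : ∀ t : K, t ≠ 0 →
      (1/2 : ℝ) * |(t:ℝ)| < (2:ℝ) ^ (-N t) ∧ (2:ℝ) ^ (-N t) < 2 * |(t:ℝ)| := by
    intro t ht
    obtain ⟨h1, h2⟩ := hb t ht
    have hk : (2:ℝ) ^ (-N t + 1) = 2 * 2 ^ (-N t) := by
      rw [zpow_add₀ (by norm_num : (2:ℝ) ≠ 0)]; ring
    have hp : (0:ℝ) < (2:ℝ) ^ (-N t) := by positivity
    constructor
    · nlinarith
    · nlinarith
  refine ⟨f, ?_, ?_, tendsto_const_nhds, ?_, ?_⟩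
  · -- continuity at 0
    rw [ContinuousAt, hf0]
    rw [tendsto_subtype_rng]
    have htend : Tendsto (fun t : K => 2 * ‖(t:ℝ)‖) (𝓝 0) (𝓝 0) := by
      have h1 : Tendsto (fun t : K => ((t:ℝ))) (𝓝 0) (𝓝 ((0:K):ℝ)) :=
        (continuous_subtype_val.tendsto (0:K))
      have := (h1.norm).const_mul (2:ℝ)
      simpa using this
    refine squeeze_zero_norm (fun t => ?_) htend
    by_cases ht : t = 0
    · simp [ht, hf0]
    · rw [hfval t ht]
      have := (hbound t ht).2
      simp only [Real.norm_eq_abs]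
      rw [abs_of_pos (by positivity : (0:ℝ) < (2:ℝ) ^ (-N t))]
      linarith
  · -- derivative 0 at nonzero points
    intro t ht
    have hev : ∀ᶠ x in 𝓝 t, f x = f t := by
      obtain ⟨h1, h2⟩ := hb t ht
      have hopen : IsOpen {x : K | c * 2 ^ (-N t) < |(x:ℝ)| ∧ |(x:ℝ)| < c * 2 ^ (-N t + 1)} := by
        have hcont : Continuous fun x : K => |(x:ℝ)| := continuous_subtype_val.abs
        exact (isOpen_Ioo.preimage hcont : IsOpen ((fun x : K => |(x:ℝ)|) ⁻¹' Set.Ioo _ _))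
      filter_upwards [hopen.mem_nhds ⟨h1, h2⟩] with x hx
      have hx0 : (x:ℝ) ≠ 0 := by
        intro h; rw [h, abs_zero] at hx
        have : (0:ℝ) < c * 2 ^ (-N t) := by positivity
        linarith [hx.1]
      have hxK : x ≠ 0 := fun h => hx0 (by rw [h]; simp)
      have hNx : N x = N t := by
        have := aux_ceil_eq c hc0 |(x:ℝ)| (abs_pos.mpr hx0) (N t) hx.1 hx.2
        rw [hN]
        exact this
      rw [hf]
      simp only [if_neg hxK, if_neg ht, hNx]
    refine Tendsto.congr' ?_ (tendsto_const_nhds : Tendsto (fun _ : K => (0:K)) _ _)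
    filter_upwards [nhdsWithin_le_nhds hev] with x hx
    rw [hx, sub_self, zero_div]
  · -- the bounds in K
    intro t ht
    have hab : ((|t| : K) : ℝ) = |(t:ℝ)| := aux_coe_abs K t
    have habf : ((|f t| : K) : ℝ) = |((f t : K) : ℝ)| := aux_coe_abs K (f t)
    obtain ⟨h1, h2⟩ := hbound t ht
    have hfv := hfval t ht
    have h2K : (((2:K)):ℝ) = 2 := by norm_cast
    constructor
    · rw [← Subtype.coe_lt_coe]
      push_cast [hab, habf, hfv, h2K]
      rw [abs_of_pos (by positivity : (0:ℝ) < (2:ℝ) ^ (-N t))]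
      linarith
    · rw [← Subtype.coe_lt_coe]
      push_cast [hab, habf, hfv, h2K]
      rw [abs_of_pos (by positivity : (0:ℝ) < (2:ℝ) ^ (-N t))]
      linarith
  · -- derivative at 0 nonzero
    intro L hL hL0
    rw [hL0] at hL
    have hne : (𝓝[≠] (0:K)).NeBot := by
      rw [← mem_closure_iff_nhdsWithin_neBot]
      refine mem_closure_of_tendsto (b := atTop) (f := fun n : ℕ => (((n:K) + 1)⁻¹ : K)) ?_ ?_
      · rw [tendsto_subtype_rng]
        have : Tendsto (fun n : ℕ => ((n:ℝ) + 1)⁻¹) atTop (𝓝 0) := by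
          simpa [one_div] using tendsto_one_div_add_atTop_nhds_zero_nat (𝕜 := ℝ)
        refine this.congr ?_
        intro n; push_cast; ring
      · filter_upwards with n
        have : ((n:K) + 1) ≠ 0 := by positivity
        simp [Set.mem_setOf_eq, inv_ne_zero this]
    have hL' : Tendsto (fun x : K => (((f x - f 0) / (x - 0) : K) : ℝ)) (𝓝[≠] 0) (𝓝 0) := by
      have := (continuous_subtype_val.tendsto (0:K)).comp hL
      simpa [Function.comp_def] using this
    have hev2 := Metric.tendsto_nhds.mp hL' (1/2) (by norm_num)
    have hev3 : ∀ᶠ x : K in 𝓝[≠] 0, x ≠ 0 := self_mem_nhdsWithin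
    obtain ⟨x, hx1, hx2⟩ := (hev2.and hev3).exists
    have hxr : ((x:ℝ)) ≠ 0 := hcoe0 x hx2
    have hcval : (((f x - f 0) / (x - 0) : K) : ℝ) = ((f x : K) : ℝ) / (x:ℝ) := by
      rw [hf0]; push_cast; ring
    rw [Real.dist_eq, sub_zero, hcval] at hx1
    have h1 := (hbound x hx2).1
    have hfv := hfval x hx2
    rw [abs_div, hfv] at hx1
    rw [abs_of_pos (by positivity : (0:ℝ) < (2:ℝ) ^ (-N x))] at hx1
    rw [div_lt_iff₀ (abs_pos.mpr hxr)] at hx1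
    linarith
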